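/- Let λ, λ' ∈ ℂ with |λ| > 1, |λ'| > 1 and λ ≠ λ'. Then the map (S,R) ↦ (S*·H_m(λ) + H_n(λ')·R, R*·H_n(λ') + H_m(λ)·S), where S ∈ ℂ^{2m×2n} and R ∈ ℂ^{2n×2m}, is surjective onto ℂ^{2n×2m} × ℂ^{2m×2n}; equivalently, T(H_m(λ), H_n(λ')) = ℂ^{2n×2m} × ℂ^{2m×2n}. -/

import Mathlib

open Matrix

/-- The `n×n` upper-triangular Jordan block with eigenvalue `l`. -/
noncomputable def Jmat (n : ℕ) (l : ℂ) : Matrix (Fin n) (Fin n) ℂ :=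
  Matrix.of fun i j =>
    if (i : ℕ) = (j : ℕ) then l
    else if (j : ℕ) = (i : ℕ) + 1 then 1 else 0

/-- The symmetric matrix `Δ_n`: (1-based) entry `(j,k)` is `1` if `j+k = n+1`,
`i` if `j+k = n+2`, and `0` otherwise. -/
noncomputable def Dmat (n : ℕ) : Matrix (Fin n) (Fin n) ℂ :=
  Matrix.of fun i j =>
    if (i : ℕ) + (j : ℕ) + 1 = n then 1
    else if (i : ℕ) + (j : ℕ) = n then Complex.I
    else 0

/-- The `2m×2m` block matrix `H_m(l) = [[0, I],[J_m(l), 0]]`. -/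
noncomputable def Hmat (m : ℕ) (l : ℂ) : Matrix (Fin m ⊕ Fin m) (Fin m ⊕ Fin m) ℂ :=
  Matrix.fromBlocks 0 1 (Jmat m l) 0

/-- `T(A) = {CᴴA + AC}`, the tangent space to the *congruence class of `A`. -/
def Tset {n : Type*} [Fintype n] (A : Matrix n n ℂ) : Set (Matrix n n ℂ) :=
  {X | ∃ C : Matrix n n ℂ, X = Cᴴ * A + A * C}

/-- `T(M,N) = {(SᴴM + NR, RᴴN + MS)}`. -/
def Tpair {p q : Type*} [Fintype p] [Fintype q]
    (M : Matrix p p ℂ) (N : Matrix q q ℂ) :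
    Set (Matrix q p ℂ × Matrix p q ℂ) :=
  {X | ∃ (S : Matrix p q ℂ) (R : Matrix q p ℂ),
      X = (Sᴴ * M + N * R, Rᴴ * N + M * S)}


set_option linter.unusedSectionVars false

lemma jmat_sub_smul (k : ℕ) (l c : ℂ) : Jmat k l - c • 1 = Jmat k (l - c) := by
  ext i j
  by_cases h : (i : ℕ) = (j : ℕ)
  · have : i = j := Fin.ext h
    subst this
    simp [Jmat, Matrix.one_apply]
  · have : i ≠ j := fun hh => h (by rw [hh])
    simp [Jmat, Matrix.one_apply, h, this]

lemma jmat_blockTriangular (k : ℕ) (l : ℂ) :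
    (Jmat k l).BlockTriangular (id : Fin k → Fin k) := by
  intro i j hij
  simp only [id] at hij
  have h1 : (i : ℕ) ≠ j := by omega
  have h2 : (j : ℕ) ≠ (i : ℕ) + 1 := by omega
  simp [Jmat, h1, h2]

lemma jmat_det (k : ℕ) (l : ℂ) : (Jmat k l).det = l ^ k := by
  rw [Matrix.det_of_upperTriangular (jmat_blockTriangular k l)]
  simp [Jmat]

lemma jmat_pow_entry (k p : ℕ) (i j : Fin k) (h : (j : ℕ) < (i : ℕ) + p) :
    ((Jmat k 0) ^ p) i j = 0 := by
  induction p generalizing j with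
  | zero =>
    rw [pow_zero]
    have : i ≠ j := by intro hh; subst hh; omega
    simp [Matrix.one_apply, this]
  | succ p ih =>
    rw [pow_succ, Matrix.mul_apply]
    apply Finset.sum_eq_zero
    intro x _
    by_cases hx : (x : ℕ) < (i : ℕ) + p
    · rw [ih x hx, zero_mul]
    · have hj : Jmat k 0 x j = 0 := by
        have h2 : (j : ℕ) ≠ (x : ℕ) + 1 := by omega
        simp [Jmat, h2]
      rw [hj, mul_zero]

lemma jmat_nilpotent (k : ℕ) : (Jmat k 0) ^ k = 0 := by
  ext i j
  rw [jmat_pow_entry k k i j (by omega)]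
  simp

section sylvester
variable {α β : Type*} [Fintype α] [DecidableEq α] [Fintype β] [DecidableEq β]

lemma comm_pow {L : Matrix β β ℂ} {K : Matrix α α ℂ} {R : Matrix β α ℂ}
    (h : L * R = R * K) (p : ℕ) : L ^ p * R = R * K ^ p := by
  induction p with
  | zero => simp
  | succ p ih =>
    rw [pow_succ, pow_succ, Matrix.mul_assoc, h, ← Matrix.mul_assoc, ih,
      Matrix.mul_assoc]

lemma sylvester_solvable (L : Matrix β β ℂ) (K : Matrix α α ℂ) (p : ℕ) (a b : ℂ)
    (hK : (K - a • 1) ^ p * (K - b • 1) ^ p = 0)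
    (hL : IsUnit ((L - a • 1) ^ p * (L - b • 1) ^ p))
    (C : Matrix β α ℂ) : ∃ R : Matrix β α ℂ, L * R - R * K = C := by
  let f : Matrix β α ℂ →ₗ[ℂ] Matrix β α ℂ :=
    { toFun := fun R => L * R - R * K
      map_add' := by intro x y; simp [Matrix.mul_add, Matrix.add_mul]; abel
      map_smul' := by intro c x; simp [Matrix.mul_smul, Matrix.smul_mul]; rw [smul_sub] }
  have hinj : Function.Injective f := by
    rw [← LinearMap.ker_eq_bot, LinearMap.ker_eq_bot']
    intro R hR
    have h0 : L * R - R * K = 0 := hR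
    have h : L * R = R * K := by rw [sub_eq_zero] at h0; exact h0
    have ha : (L - a • 1) * R = R * (K - a • 1) := by
      simp [Matrix.sub_mul, Matrix.mul_sub, Matrix.smul_mul, Matrix.mul_smul, h]
    have hb : (L - b • 1) * R = R * (K - b • 1) := by
      simp [Matrix.sub_mul, Matrix.mul_sub, Matrix.smul_mul, Matrix.mul_smul, h]
    have hpow : (L - a • 1) ^ p * (L - b • 1) ^ p * R = R * ((K - a • 1) ^ p * (K - b • 1) ^ p) := by
      rw [Matrix.mul_assoc, comm_pow hb, ← Matrix.mul_assoc, comm_pow ha,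
        Matrix.mul_assoc]
    rw [hK, Matrix.mul_zero] at hpow
    obtain ⟨u, hu⟩ := hL
    have := hpow
    calc R = 1 * R := (Matrix.one_mul R).symm
      _ = (↑u⁻¹ * ((L - a • 1) ^ p * (L - b • 1) ^ p)) * R := by
            rw [← hu, Units.inv_mul, Matrix.one_mul]
      _ = (↑u⁻¹ : Matrix β β ℂ) * ((L - a • 1) ^ p * (L - b • 1) ^ p * R) := by
            rw [Matrix.mul_assoc]
      _ = 0 := by rw [hpow, Matrix.mul_zero]
  have hsurj : Function.Surjective f := LinearMap.injective_iff_surjective.mp hinj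
  obtain ⟨R, hR⟩ := hsurj C
  exact ⟨R, hR⟩

end sylvester

section blocks
variable {p q : Type*} [Fintype p] [DecidableEq p] [Fintype q] [DecidableEq q]

lemma fromBlocks_diag_sub (A A' : Matrix p p ℂ) (D D' : Matrix q q ℂ) :
    Matrix.fromBlocks A 0 0 D - Matrix.fromBlocks A' 0 0 D' =
      Matrix.fromBlocks (A - A') 0 0 (D - D') := by
  rw [sub_eq_add_neg, Matrix.fromBlocks_neg, Matrix.fromBlocks_add]
  simp [sub_eq_add_neg]

lemma fromBlocks_diag_pow (A : Matrix p p ℂ) (D : Matrix q q ℂ) (k : ℕ) :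
    (Matrix.fromBlocks A 0 0 D) ^ k = Matrix.fromBlocks (A ^ k) 0 0 (D ^ k) := by
  induction k with
  | zero => simp [Matrix.fromBlocks_one]
  | succ k ih =>
    rw [pow_succ, pow_succ, ih, Matrix.fromBlocks_multiply]
    simp [pow_succ]

lemma fromBlocks_diag_sub_smul_one (A : Matrix p p ℂ) (D : Matrix q q ℂ) (c : ℂ) :
    Matrix.fromBlocks A 0 0 D - c • 1 =
      Matrix.fromBlocks (A - c • 1) 0 0 (D - c • 1) := by
  rw [← Matrix.fromBlocks_one, Matrix.fromBlocks_smul, ← fromBlocks_diag_sub]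
  simp

lemma fromBlocks_diag_isUnit {A : Matrix p p ℂ} {D : Matrix q q ℂ}
    (hA : IsUnit A) (hD : IsUnit D) : IsUnit (Matrix.fromBlocks A 0 0 D) := by
  obtain ⟨iA⟩ := hA.nonempty_invertible
  obtain ⟨iD⟩ := hD.nonempty_invertible
  have h : Matrix.fromBlocks A 0 0 D * Matrix.fromBlocks (⅟A) 0 0 (⅟D) = 1 := by
    rw [Matrix.fromBlocks_multiply]
    simp [Matrix.fromBlocks_one]
  letI := invertibleOfRightInverse _ _ h
  exact isUnit_of_invertible _

end blocks

section jordan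
variable (k : ℕ) (l : ℂ)

lemma jmat_isUnit (hl : l ≠ 0) : IsUnit (Jmat k l) := by
  rw [Matrix.isUnit_iff_isUnit_det, jmat_det]
  exact (hl.isUnit).pow k

lemma smul_one_isUnit {c : ℂ} (hc : c ≠ 0) : IsUnit (c • (1 : Matrix (Fin k) (Fin k) ℂ)) := by
  have h : (c • (1 : Matrix (Fin k) (Fin k) ℂ)) * (c⁻¹ • 1) = 1 := by
    rw [Matrix.smul_mul, Matrix.one_mul, smul_smul, mul_inv_cancel₀ hc, one_smul]
  letI := invertibleOfRightInverse _ _ h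
  exact isUnit_of_invertible _

lemma invOf_jmat_sub (hl : l ≠ 0) [Invertible (Jmat k l)] (c : ℂ) (hc : c ≠ 0) :
    ⅟(Jmat k l) - c • 1 = (-c) • (⅟(Jmat k l) * Jmat k (l - c⁻¹)) := by
  have h0 : Jmat k (l - c⁻¹) = Jmat k l - c⁻¹ • 1 := (jmat_sub_smul k l c⁻¹).symm
  rw [h0, Matrix.mul_sub, invOf_mul_self, Matrix.mul_smul, Matrix.mul_one, smul_sub,
    smul_smul, neg_mul, mul_inv_cancel₀ hc, neg_smul, neg_smul, one_smul, sub_neg_eq_add]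
  abel

lemma invOf_jmat_sub_isUnit (hl : l ≠ 0) [Invertible (Jmat k l)] (c : ℂ) (hc : c ≠ 0)
    (hne : l ≠ c⁻¹) : IsUnit (⅟(Jmat k l) - c • 1) := by
  rw [invOf_jmat_sub k l hl c hc]
  have h1 : IsUnit (⅟(Jmat k l)) := isUnit_of_invertible _
  have h2 : IsUnit (Jmat k (l - c⁻¹)) := jmat_isUnit k _ (sub_ne_zero.mpr hne)
  have : (-c) • (⅟(Jmat k l) * Jmat k (l - c⁻¹)) =
      ((-c) • 1) * (⅟(Jmat k l) * Jmat k (l - c⁻¹)) := by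
    rw [Matrix.smul_mul, Matrix.one_mul]
  rw [this]
  exact (smul_one_isUnit k (neg_ne_zero.mpr hc)).mul (h1.mul h2)

lemma invOf_jmat_sub_nilp (hl : l ≠ 0) [Invertible (Jmat k l)] :
    (⅟(Jmat k l) - l⁻¹ • 1) ^ k = 0 := by
  have h := invOf_jmat_sub k l hl l⁻¹ (inv_ne_zero hl)
  rw [inv_inv, sub_self] at h
  have hcomm : Commute (⅟(Jmat k l)) (Jmat k 0) := by
    have h0 : Jmat k 0 = Jmat k l - l • 1 := by rw [jmat_sub_smul, sub_self]
    rw [Commute, SemiconjBy, h0, Matrix.mul_sub, Matrix.sub_mul, Matrix.mul_smul,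
      Matrix.smul_mul, Matrix.mul_one, Matrix.one_mul, invOf_mul_self, mul_invOf_self]
  rw [h, smul_pow, hcomm.mul_pow, jmat_nilpotent, Matrix.mul_zero, smul_zero]

end jordan

section reduce
variable {p q : Type*} [Fintype p] [DecidableEq p] [Fintype q] [DecidableEq q]

lemma reduce_pair (H : Matrix p p ℂ) (H' : Matrix q q ℂ)
    (Hi : Matrix p p ℂ) (Hi' : Matrix q q ℂ)
    (hH1 : Hi * H = 1) (hH2' : H' * Hi' = 1)
    (hsyl : ∀ C : Matrix q p ℂ, ∃ R : Matrix q p ℂ,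
      (Hi' * H'ᴴ) * R - R * (Hi * Hᴴ) = C)
    (B : Matrix q p ℂ) (A : Matrix p q ℂ) :
    ∃ (S : Matrix p q ℂ) (R : Matrix q p ℂ),
      B = Sᴴ * H + H' * R ∧ A = Rᴴ * H' + H * S := by
  obtain ⟨R, hR⟩ := hsyl (Hi' * (Aᴴ - B * (Hi * Hᴴ)))
  refine ⟨((B - H' * R) * Hi)ᴴ, R, ?_, ?_⟩
  · rw [Matrix.conjTranspose_conjTranspose, Matrix.mul_assoc, hH1, Matrix.mul_one]
    abel
  · have hhr : H' * ((Hi' * H'ᴴ) * R - R * (Hi * Hᴴ)) =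
        H' * (Hi' * (Aᴴ - B * (Hi * Hᴴ))) := by rw [hR]
    simp only [Matrix.mul_sub, ← Matrix.mul_assoc, hH2', Matrix.one_mul] at hhr
    -- hhr : H'ᴴ * R - H' * R * Hi * Hᴴ = Aᴴ - B * Hi * Hᴴ  (fully left assoc)
    have key : ((B - H' * R) * Hi) * Hᴴ + H'ᴴ * R = Aᴴ := by
      rw [sub_eq_iff_eq_add] at hhr
      simp only [Matrix.sub_mul, ← Matrix.mul_assoc]
      rw [hhr]
      abel
    have hA : A = (((B - H' * R) * Hi) * Hᴴ + H'ᴴ * R)ᴴ := by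
      rw [key, Matrix.conjTranspose_conjTranspose]
    rw [hA]
    simp only [Matrix.conjTranspose_add, Matrix.conjTranspose_mul,
      Matrix.conjTranspose_conjTranspose]
    abel

end reduce

lemma conj_sub_smul (k : ℕ) (l c : ℂ) :
    (Jmat k l)ᴴ - (starRingEnd ℂ c) • 1 = (Jmat k (l - c))ᴴ := by
  rw [← jmat_sub_smul, Matrix.conjTranspose_sub, Matrix.conjTranspose_smul,
    Matrix.conjTranspose_one]
  rfl

/-- For `|λ|, |λ'| > 1` and `λ ≠ λ'`:
`T(H_m(λ), H_n(λ')) = ℂ^{2n×2m} × ℂ^{2m×2n}`. -/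
theorem stmt11 (m n : ℕ) (l l' : ℂ)
    (hl : 1 < ‖l‖) (hl' : 1 < ‖l'‖) (hne : l ≠ l')
    (B : Matrix (Fin n ⊕ Fin n) (Fin m ⊕ Fin m) ℂ)
    (A : Matrix (Fin m ⊕ Fin m) (Fin n ⊕ Fin n) ℂ) :
    ∃ (S : Matrix (Fin m ⊕ Fin m) (Fin n ⊕ Fin n) ℂ)
      (R : Matrix (Fin n ⊕ Fin n) (Fin m ⊕ Fin m) ℂ),
      B = Sᴴ * Hmat m l + Hmat n l' * R ∧
      A = Rᴴ * Hmat n l' + Hmat m l * S := by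
  have hl0 : l ≠ 0 := by
    intro h; rw [h, norm_zero] at hl; norm_num at hl
  have hl'0 : l' ≠ 0 := by
    intro h; rw [h, norm_zero] at hl'; norm_num at hl'
  have hconj0 : (starRingEnd ℂ) l ≠ 0 := by
    simpa using hl0
  have hc1 : l' ≠ ((starRingEnd ℂ) l)⁻¹ := by
    intro h
    have habs : ‖l'‖ = ‖l‖⁻¹ := by
      rw [h, norm_inv, Complex.norm_conj]
    have h2 : ‖l‖⁻¹ < 1 := by
      rw [inv_lt_one_iff₀]; right; exact hl
    rw [habs] at hl'
    linarith
  obtain ⟨iJ⟩ := (jmat_isUnit m l hl0).nonempty_invertible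
  obtain ⟨iJ'⟩ := (jmat_isUnit n l' hl'0).nonempty_invertible
  set J := Jmat m l with hJdef
  set J' := Jmat n l' with hJ'def
  set Hi : Matrix (Fin m ⊕ Fin m) (Fin m ⊕ Fin m) ℂ := Matrix.fromBlocks 0 (⅟J) 1 0 with hHidef
  set Hi' : Matrix (Fin n ⊕ Fin n) (Fin n ⊕ Fin n) ℂ := Matrix.fromBlocks 0 (⅟J') 1 0 with hHi'def
  have hH1 : Hi * Hmat m l = 1 := by
    rw [hHidef, Hmat, Matrix.fromBlocks_multiply]
    simp [Matrix.fromBlocks_one]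
    rw [← hJdef, Matrix.nonsing_inv_mul _ ((Matrix.isUnit_iff_isUnit_det _).mp (isUnit_of_invertible _)), Matrix.fromBlocks_one]
  have hH2' : Hmat n l' * Hi' = 1 := by
    rw [hHi'def, Hmat, Matrix.fromBlocks_multiply]
    simp [Matrix.fromBlocks_one]
    rw [← hJ'def, Matrix.mul_nonsing_inv _ ((Matrix.isUnit_iff_isUnit_det _).mp (isUnit_of_invertible _)), Matrix.fromBlocks_one]
  have hKeq : Hi * (Hmat m l)ᴴ = Matrix.fromBlocks (⅟J) 0 0 (Jᴴ) := by
    rw [hHidef, Hmat, Matrix.fromBlocks_conjTranspose, Matrix.fromBlocks_multiply]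
    simp
    rfl
  have hLeq : Hi' * (Hmat n l')ᴴ = Matrix.fromBlocks (⅟J') 0 0 (J'ᴴ) := by
    rw [hHi'def, Hmat, Matrix.fromBlocks_conjTranspose, Matrix.fromBlocks_multiply]
    simp
    rfl
  -- nilpotency on the K side
  have hKnil : (Matrix.fromBlocks (⅟J) 0 0 (Jᴴ) - l⁻¹ • 1) ^ m *
      (Matrix.fromBlocks (⅟J) 0 0 (Jᴴ) - (starRingEnd ℂ l) • 1) ^ m = 0 := by
    rw [fromBlocks_diag_sub_smul_one, fromBlocks_diag_sub_smul_one,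
      fromBlocks_diag_pow, fromBlocks_diag_pow, Matrix.fromBlocks_multiply]
    have h1 : (⅟J - l⁻¹ • 1) ^ m = 0 := invOf_jmat_sub_nilp m l hl0
    have h2 : (Jᴴ - (starRingEnd ℂ l) • 1) ^ m = 0 := by
      rw [conj_sub_smul, sub_self, ← Matrix.conjTranspose_pow, jmat_nilpotent]
      simp
    rw [h1, h2]
    simp [Matrix.fromBlocks_zero]
  -- unit on the L side
  have hLunit : IsUnit ((Matrix.fromBlocks (⅟J') 0 0 (J'ᴴ) - l⁻¹ • 1) ^ m *
      (Matrix.fromBlocks (⅟J') 0 0 (J'ᴴ) - (starRingEnd ℂ l) • 1) ^ m) := by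
    rw [fromBlocks_diag_sub_smul_one, fromBlocks_diag_sub_smul_one,
      fromBlocks_diag_pow, fromBlocks_diag_pow, Matrix.fromBlocks_multiply]
    have u1 : IsUnit (⅟J' - l⁻¹ • 1) := by
      refine invOf_jmat_sub_isUnit n l' hl'0 l⁻¹ (inv_ne_zero hl0) ?_
      rw [inv_inv]; exact fun h => hne (h.symm)
    have u2 : IsUnit (⅟J' - (starRingEnd ℂ l) • 1) :=
      invOf_jmat_sub_isUnit n l' hl'0 _ hconj0 hc1
    have v1 : IsUnit (J'ᴴ - l⁻¹ • 1) := by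
      have : l⁻¹ = starRingEnd ℂ (((starRingEnd ℂ) l)⁻¹) := by
        rw [map_inv₀, Complex.conj_conj]
      rw [this, conj_sub_smul, Matrix.isUnit_conjTranspose]
      exact jmat_isUnit n _ (sub_ne_zero.mpr hc1)
    have v2 : IsUnit (J'ᴴ - (starRingEnd ℂ l) • 1) := by
      rw [conj_sub_smul, Matrix.isUnit_conjTranspose]
      exact jmat_isUnit n _ (sub_ne_zero.mpr hne.symm)
    have := fromBlocks_diag_isUnit ((u1.pow m).mul (u2.pow m)) ((v1.pow m).mul (v2.pow m))
    simpa using this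
  have hsyl : ∀ C : Matrix (Fin n ⊕ Fin n) (Fin m ⊕ Fin m) ℂ,
      ∃ R : Matrix (Fin n ⊕ Fin n) (Fin m ⊕ Fin m) ℂ,
        (Hi' * (Hmat n l')ᴴ) * R - R * (Hi * (Hmat m l)ᴴ) = C := by
    intro C
    rw [hLeq, hKeq]
    exact sylvester_solvable _ _ m l⁻¹ (starRingEnd ℂ l) hKnil hLunit C
  exact reduce_pair (Hmat m l) (Hmat n l') Hi Hi' hH1 hH2' hsyl B A
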